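/- Let A_1, …, A_M be real n×n matrices, B_1, …, B_M real n×m matrices, and let Σ = diag(σ_1, …, σ_n) be a diagonal matrix with σ_1 ≥ σ_2 ≥ … ≥ σ_n > 0. Assume that for every k ∈ {1,…,M} the matrix −(A_k·Σ + Σ·A_kᵀ + B_k·B_kᵀ) is positive definite. Let 1 ≤ r ≤ n, let Â_k denote the top-left r×r submatrix of A_k, and let Σ_1 = diag(σ_1,…,σ_r). Then for every k ∈ {1,…,M} the matrix −(Â_k·Σ_1 + Σ_1·Â_kᵀ) is positive definite; in particular there exists a positive definite r×r matrix P̂ (namely P̂ = Σ_1⁻¹) with Â_kᵀ·P̂ + P̂·Â_k negative definite for all k, i.e. the reduced linear switched system is quadratically stable. -/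

import Mathlib

open Matrix

private lemma posDef_conj_mul {N : ℕ} {m : Type*} [Fintype m]
    {A : Matrix (Fin N) (Fin N) ℝ} (hA : A.PosDef) (B : Matrix (Fin N) m ℝ)
    (hB : ∀ x : m → ℝ, B *ᵥ x = 0 → x = 0) :
    (Bᴴ * A * B).PosDef := by
  refine PosDef.of_dotProduct_mulVec_pos (isHermitian_conjTranspose_mul_mul B hA.1) ?_
  · intro x hx
    have hBx : B *ᵥ x ≠ 0 := fun h => hx (hB x h)
    simpa only [star_mulVec, dotProduct_mulVec, vecMul_vecMul] using hA.dotProduct_mulVec_pos hBx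

private lemma posDef_submatrix {N r : ℕ} {A : Matrix (Fin N) (Fin N) ℝ}
    (hA : A.PosDef) (e : Fin r → Fin N) (he : Function.Injective e) :
    (A.submatrix e e).PosDef := by
  have h : A.submatrix e e = (Matrix.submatrix (1 : Matrix (Fin N) (Fin N) ℝ) id e)ᴴ * A *
      (Matrix.submatrix (1 : Matrix (Fin N) (Fin N) ℝ) id e) := by
    rw [(by simp : A = 1 * A * 1), Matrix.submatrix_mul (he₂ := Function.bijective_id),
      Matrix.submatrix_mul (he₂ := Function.bijective_id), Matrix.submatrix_id_id]
    simp [conjTranspose_submatrix, conjTranspose_one]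
  rw [h]
  refine posDef_conj_mul hA _ (fun x hx => ?_)
  funext j
  have := congrFun hx (e j)
  simpa [Matrix.mulVec, dotProduct, Matrix.one_apply, Function.Injective.eq_iff he,
    eq_comm] using this

theorem balanced_truncation_quadratic_stability
    {n m M : ℕ}
    (A : Fin M → Matrix (Fin n) (Fin n) ℝ)
    (B : Fin M → Matrix (Fin n) (Fin m) ℝ)
    (σ : Fin n → ℝ) (hσpos : ∀ i, 0 < σ i) (hσmono : Antitone σ)
    (hLyap : ∀ k : Fin M,
      (-(A k * diagonal σ + diagonal σ * (A k)ᵀ + B k * (B k)ᵀ)).PosDef)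
    (r : ℕ) (hr : 1 ≤ r) (hrn : r ≤ n) :
    (∀ k : Fin M,
      (-((A k).submatrix (Fin.castLE hrn) (Fin.castLE hrn) *
            diagonal (σ ∘ Fin.castLE hrn) +
          diagonal (σ ∘ Fin.castLE hrn) *
            ((A k).submatrix (Fin.castLE hrn) (Fin.castLE hrn))ᵀ)).PosDef) ∧
    ∃ Phat : Matrix (Fin r) (Fin r) ℝ, Phat.PosDef ∧
      Phat = (diagonal (σ ∘ Fin.castLE hrn))⁻¹ ∧
      ∀ k : Fin M,
        (-(((A k).submatrix (Fin.castLE hrn) (Fin.castLE hrn))ᵀ * Phat +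
            Phat * (A k).submatrix (Fin.castLE hrn) (Fin.castLE hrn))).PosDef := by
  set e : Fin r → Fin n := Fin.castLE hrn with he
  have heinj : Function.Injective e := Fin.castLE_injective hrn
  -- full-size matrix without the BBᵀ term is PosDef
  have hfull : ∀ k : Fin M, (-(A k * diagonal σ + diagonal σ * (A k)ᵀ)).PosDef := by
    intro k
    have hBB : (B k * (B k)ᵀ).PosSemidef := by
      have := posSemidef_self_mul_conjTranspose (B k)
      simpa using this
    have heq : -(A k * diagonal σ + diagonal σ * (A k)ᵀ) =
        -(A k * diagonal σ + diagonal σ * (A k)ᵀ + B k * (B k)ᵀ) + B k * (B k)ᵀ := by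
      abel
    rw [heq]
    exact (hLyap k).add_posSemidef hBB
  -- part 1 : truncated matrix is a principal submatrix
  have hsub : ∀ k : Fin M,
      -((A k).submatrix e e * diagonal (σ ∘ e) + diagonal (σ ∘ e) * ((A k).submatrix e e)ᵀ)
        = (-(A k * diagonal σ + diagonal σ * (A k)ᵀ)).submatrix e e := by
    intro k
    ext i j
    simp [Matrix.mul_diagonal, Matrix.diagonal_mul, Matrix.submatrix_apply,
      Matrix.transpose_apply]
  have part1 : ∀ k : Fin M,
      (-((A k).submatrix e e * diagonal (σ ∘ e) +
        diagonal (σ ∘ e) * ((A k).submatrix e e)ᵀ)).PosDef := by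
    intro k
    rw [hsub k]
    exact posDef_submatrix (hfull k) e heinj
  refine ⟨part1, ?_⟩
  -- part 2
  set P : Matrix (Fin r) (Fin r) ℝ := diagonal (fun i => (σ (e i))⁻¹) with hP
  have hPinv : P = (diagonal (σ ∘ e))⁻¹ := by
    refine (Matrix.inv_eq_left_inv ?_).symm
    rw [hP, Matrix.diagonal_mul_diagonal,
      show (fun i => (σ (e i))⁻¹ * (σ ∘ e) i) = fun _ => (1:ℝ) from
        funext fun i => inv_mul_cancel₀ (hσpos (e i)).ne', Matrix.diagonal_one]
  have hPpos : P.PosDef := by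
    rw [hP]
    exact Matrix.PosDef.diagonal (fun i => inv_pos.mpr (hσpos (e i)))
  refine ⟨P, hPpos, hPinv, fun k => ?_⟩
  have hPS : P * diagonal (σ ∘ e) = 1 := by
    rw [hP, Matrix.diagonal_mul_diagonal,
      show (fun i => (σ (e i))⁻¹ * (σ ∘ e) i) = fun _ => (1:ℝ) from
        funext fun i => inv_mul_cancel₀ (hσpos (e i)).ne', Matrix.diagonal_one]
  have hSP : diagonal (σ ∘ e) * P = 1 := by
    rw [hP, Matrix.diagonal_mul_diagonal,
      show (fun i => (σ ∘ e) i * (σ (e i))⁻¹) = fun _ => (1:ℝ) from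
        funext fun i => mul_inv_cancel₀ (hσpos (e i)).ne', Matrix.diagonal_one]
  have hPherm : Pᴴ = P := by
    rw [hP]
    simp [conjTranspose, Matrix.diagonal_transpose]
  have key : -(((A k).submatrix e e)ᵀ * P + P * (A k).submatrix e e) =
      Pᴴ * (-((A k).submatrix e e * diagonal (σ ∘ e) +
        diagonal (σ ∘ e) * ((A k).submatrix e e)ᵀ)) * P := by
    rw [hPherm]
    rw [mul_neg, neg_mul, Matrix.mul_add, Matrix.add_mul]
    rw [show P * ((A k).submatrix e e * diagonal (σ ∘ e)) * P =
        P * (A k).submatrix e e * (diagonal (σ ∘ e) * P) by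
      simp only [Matrix.mul_assoc]]
    rw [show P * (diagonal (σ ∘ e) * ((A k).submatrix e e)ᵀ) * P =
        (P * diagonal (σ ∘ e)) * (((A k).submatrix e e)ᵀ * P) by
      simp only [Matrix.mul_assoc]]
    rw [hSP, hPS, Matrix.mul_one, Matrix.one_mul]
    rw [add_comm]
  rw [key]
  refine posDef_conj_mul (part1 k) P (fun x hx => ?_)
  have : diagonal (σ ∘ e) *ᵥ (P *ᵥ x) = 0 := by rw [hx, Matrix.mulVec_zero]
  rwa [Matrix.mulVec_mulVec, hSP, Matrix.one_mulVec] at this
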